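/- For every prime power q, the achromatic number of the unitary polarity graph G_{q²}^π equals q³, and its pseudo-achromatic number also equals q³. -/

import Mathlib

/-- A complete partition of a graph `G` into `r` parts, encoded as a coloring
`c : V → Fin r` such that between any two distinct color classes there is an edge. -/
def IsCompletePartition {V : Type*} (G : SimpleGraph V) {r : ℕ} (c : V → Fin r) : Prop :=
  ∀ i j : Fin r, i ≠ j → ∃ u v : V, c u = i ∧ c v = j ∧ G.Adj u v

/-- The pseudo-achromatic number: the largest `r` such that `G` admits a complete
partition into `r` parts. -/
noncomputable def pseudoAchromatic {V : Type*} (G : SimpleGraph V) : ℕ :=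
  sSup {r : ℕ | ∃ c : V → Fin r, IsCompletePartition G c}

/-- The achromatic number: the largest `r` such that `G` admits a complete
partition into `r` independent parts. -/
noncomputable def achromatic {V : Type*} (G : SimpleGraph V) : ℕ :=
  sSup {r : ℕ | ∃ c : V → Fin r, IsCompletePartition G c ∧
    ∀ u v : V, c u = c v → ¬ G.Adj u v}

/-- The unitary polarity graph `G_{q²}^π`: vertices are pairs over the field of order `q²`,
with `(x, y)` adjacent to `(z, w)` iff they are distinct and `x * z^q = y + w^q`. -/
def unitaryPolarityGraph (q : ℕ) (F : Type*) [Field F] : SimpleGraph (F × F) :=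
  SimpleGraph.fromRel (fun u v => u.1 * v.1 ^ q = u.2 + v.2 ^ q)

open Finset Polynomial in
lemma aux_filter_card_le {F : Type*} [Field F] [Fintype F] [DecidableEq F]
    (q : ℕ) (hq2 : 2 ≤ q) (a : F) :
    (Finset.univ.filter fun x : F => x ^ q = a * x).card ≤ q := by
  classical
  set P : F[X] := X ^ q - C a * X with hP
  have hdeg : P.natDegree = q := by
    have h1 : (C a * X : F[X]).natDegree ≤ 1 := by
      simpa using (natDegree_C_mul_le a (X : F[X])).trans (by simp)
    have := natDegree_sub_eq_left_of_natDegree_lt (p := (X:F[X]) ^ q) (q := C a * X) ?_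
    · simpa [hP] using this
    · simpa [natDegree_X_pow] using lt_of_le_of_lt h1 (by omega)
  have hP0 : P ≠ 0 := by
    intro h
    rw [h] at hdeg
    simp at hdeg
    omega
  have hsub : ((Finset.univ.filter fun x : F => x ^ q = a * x) : Finset F).val ⊆ P.roots := by
    intro x hx
    simp only [Finset.mem_val, Finset.mem_filter] at hx
    rw [mem_roots hP0]
    simp [hP, IsRoot, hx.2]
  calc (Finset.univ.filter fun x : F => x ^ q = a * x).card ≤ P.natDegree :=
        card_le_degree_of_subset_roots hsub
    _ = q := hdeg

open Finset in
lemma aux_card_S {F : Type*} [Field F] [Fintype F] [DecidableEq F]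
    (q p k : ℕ) [CharP F p] [Fact p.Prime] (hk : 0 < k) (hqpk : q = p ^ k)
    (hF : Fintype.card F = q ^ 2) :
    (Finset.univ.filter fun x : F => x ^ q = x).card = q := by
  have hq2 : 2 ≤ q := by
    have hp2 : 2 ≤ p := (Fact.out : p.Prime).two_le
    calc 2 = 2^1 := by norm_num
    _ ≤ p ^ k := Nat.pow_le_pow_left hp2 k |>.trans' (Nat.pow_le_pow_right (by omega) hk)
    _ = q := hqpk.symm
  have frob_sub : ∀ a b : F, (a - b) ^ q = a ^ q - b ^ q := by
    intro a b; rw [hqpk]; exact sub_pow_char_pow a b k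
  have frob_frob : ∀ a : F, (a ^ q) ^ q = a := by
    intro a
    rw [← pow_mul]
    have h : q * q = Fintype.card F := by rw [hF]; ring
    rw [h, FiniteField.pow_card]
  -- upper bound
  have hle : (Finset.univ.filter fun x : F => x ^ q = x).card ≤ q := by
    have := aux_filter_card_le (F := F) q hq2 1
    simpa using this
  -- lower bound
  have hge : q ≤ (Finset.univ.filter fun x : F => x ^ q = x).card := by
    set S := Finset.univ.filter fun x : F => x ^ q = x with hS
    set ψ : F → F := fun x => x ^ q - x with hψ
    have hfib : ∀ b ∈ Finset.univ.image ψ,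
        (Finset.univ.filter fun x => ψ x = b).card ≤ S.card := by
      intro b hb
      obtain ⟨x₀, -, hx₀⟩ := Finset.mem_image.mp hb
      apply Finset.card_le_card_of_injOn (fun x => x - x₀)
      · intro x hx
        simp only [Finset.mem_coe, Finset.mem_filter, Finset.mem_univ, true_and] at hx
        simp only [hS, Finset.mem_coe, Finset.mem_filter, Finset.mem_univ, true_and]
        rw [frob_sub]
        have h2 : x ^ q - x = x₀ ^ q - x₀ := by
          simpa [hψ] using hx.trans hx₀.symm
        linear_combination h2
      · intro x _ y _ h
        exact sub_left_injective h
    have hcardsum : Fintype.card F = ∑ b ∈ Finset.univ.image ψ,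
        (Finset.univ.filter fun x => ψ x = b).card := by
      rw [← Finset.card_univ]
      exact Finset.card_eq_sum_card_fiberwise (fun x _ => Finset.mem_image_of_mem ψ (mem_univ x))
    have himcard : (Finset.univ.image ψ).card ≤ q := by
      apply le_trans (Finset.card_le_card ?_) (aux_filter_card_le (F := F) q hq2 (-1))
      intro b hb
      obtain ⟨x, -, hx⟩ := Finset.mem_image.mp hb
      simp only [Finset.mem_filter, Finset.mem_univ, true_and]
      subst hx
      show (x ^ q - x) ^ q = -1 * (x ^ q - x)
      rw [frob_sub, frob_frob]
      ring
    have : Fintype.card F ≤ q * S.card := by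
      rw [hcardsum]
      calc ∑ b ∈ Finset.univ.image ψ, (Finset.univ.filter fun x => ψ x = b).card
          ≤ ∑ _b ∈ Finset.univ.image ψ, S.card := Finset.sum_le_sum hfib
        _ = (Finset.univ.image ψ).card * S.card := by rw [Finset.sum_const, smul_eq_mul]
        _ ≤ q * S.card := Nat.mul_le_mul_right _ himcard
    rw [hF] at this
    nlinarith [this]
  omega

open Finset in
theorem aux_main {F : Type*} [Field F] [Fintype F]
    (q p k : ℕ) [CharP F p] [Fact p.Prime] (hk : 0 < k) (hqpk : q = p ^ k)
    (hF : Fintype.card F = q ^ 2) :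
    (∃ c : F × F → Fin (q ^ 3), IsCompletePartition (unitaryPolarityGraph q F) c ∧
      ∀ u v : F × F, c u = c v → ¬ (unitaryPolarityGraph q F).Adj u v) ∧
    ∀ (r : ℕ) (c : F × F → Fin r), IsCompletePartition (unitaryPolarityGraph q F) c →
      r ≤ q ^ 3 := by
  classical
  have hq2 : 2 ≤ q := by
    have hp2 : 2 ≤ p := (Fact.out : p.Prime).two_le
    calc 2 = 2 ^ 1 := by norm_num
    _ ≤ p ^ 1 := Nat.pow_le_pow_left hp2 1
    _ ≤ p ^ k := Nat.pow_le_pow_right (by omega) hk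
    _ = q := hqpk.symm
  have frob_add : ∀ a b : F, (a + b) ^ q = a ^ q + b ^ q := by
    intro a b; rw [hqpk]; exact add_pow_char_pow a b p k
  have frob_sub : ∀ a b : F, (a - b) ^ q = a ^ q - b ^ q := by
    intro a b; rw [hqpk]; exact sub_pow_char_pow a b k
  have frob_frob : ∀ a : F, (a ^ q) ^ q = a := by
    intro a
    rw [← pow_mul]
    have h : q * q = Fintype.card F := by rw [hF]; ring
    rw [h, FiniteField.pow_card]
  have frob_inj : ∀ a b : F, a ^ q = b ^ q → a = b := by
    intro a b h
    have := congrArg (· ^ q) h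
    simpa [frob_frob] using this
  have adj_iff : ∀ u v : F × F, (unitaryPolarityGraph q F).Adj u v ↔
      u ≠ v ∧ (u.1 * v.1 ^ q = u.2 + v.2 ^ q ∨ v.1 * u.1 ^ q = v.2 + u.2 ^ q) := by
    intro u v
    exact SimpleGraph.fromRel_adj _ u v
  -- ===================== upper bound =====================
  have upper : ∀ (r : ℕ) (c : F × F → Fin r),
      IsCompletePartition (unitaryPolarityGraph q F) c → r ≤ q ^ 3 := by
    intro r c hc
    by_contra hr
    push_neg at hr
    have snd_det : ∀ u v : F × F, (unitaryPolarityGraph q F).Adj u v →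
        v.2 = u.1 ^ q * v.1 - u.2 ^ q := by
      intro u v huv
      rw [adj_iff] at huv
      rcases huv.2 with h | h
      · have h1 : v.2 ^ q = u.1 * v.1 ^ q - u.2 := by linear_combination -h
        have h2 := congrArg (· ^ q) h1
        rw [frob_frob, frob_sub, mul_pow, frob_frob] at h2
        linear_combination h2
      · linear_combination -h
    have hexists : ∀ pr : Fin r × Fin r, pr.1 ≠ pr.2 →
        ∃ uv : (F × F) × (F × F), c uv.1 = pr.1 ∧ c uv.2 = pr.2 ∧
          (unitaryPolarityGraph q F).Adj uv.1 uv.2 := by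
      intro pr hne
      obtain ⟨u, v, h1, h2, h3⟩ := hc pr.1 pr.2 hne
      exact ⟨(u, v), h1, h2, h3⟩
    set f : Fin r × Fin r → (F × F) × F := fun pr =>
      if h : pr.1 ≠ pr.2 then ((hexists pr h).choose.1, (hexists pr h).choose.2.1)
      else ((0, 0), 0) with hf
    have hinj : ∀ a ∈ (Finset.univ : Finset (Fin r)).offDiag,
        ∀ b ∈ (Finset.univ : Finset (Fin r)).offDiag, f a = f b → a = b := by
      intro a ha b hb hab
      rw [Finset.mem_offDiag] at ha hb
      have ha' := ha.2.2
      have hb' := hb.2.2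
      obtain ⟨sa1, sa2, sa3⟩ := (hexists a ha').choose_spec
      obtain ⟨sb1, sb2, sb3⟩ := (hexists b hb').choose_spec
      rw [hf] at hab
      simp only [dif_pos ha', dif_pos hb', Prod.mk.injEq] at hab
      obtain ⟨h1, h2⟩ := hab
      have hv : (hexists a ha').choose.2 = (hexists b hb').choose.2 := by
        have e1 := snd_det _ _ sa3
        have e2 := snd_det _ _ sb3
        apply Prod.ext h2
        rw [e1, e2, h1, h2]
      have : a = ((c (hexists a ha').choose.1), c (hexists a ha').choose.2) := by
        rw [sa1, sa2]
      rw [this, h1, hv, sb1, sb2]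
    have hcard : ((Finset.univ : Finset (Fin r)).offDiag).card ≤
        Fintype.card ((F × F) × F) := by
      rw [← Finset.card_univ]
      exact Finset.card_le_card_of_injOn f (fun _ _ => Finset.mem_univ _) hinj
    rw [Finset.offDiag_card, Finset.card_univ, Fintype.card_fin, Fintype.card_prod,
      Fintype.card_prod, hF] at hcard
    have hq6 : q ^ 2 * q ^ 2 * q ^ 2 = q ^ 6 := by ring
    rw [hq6] at hcard
    obtain ⟨m, rfl⟩ : ∃ m, r = m + 1 := ⟨r - 1, by omega⟩
    have hmm : (m + 1) * (m + 1) = (m + 1) * m + (m + 1) := by ring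
    have h1 : (m + 1) * m ≤ q ^ 6 := by omega
    have hm : q ^ 3 ≤ m := by omega
    have h2 : (q ^ 3 + 1) * q ^ 3 ≤ (m + 1) * m := Nat.mul_le_mul (by omega) hm
    have h3 : (q ^ 3 + 1) * q ^ 3 = q ^ 6 + q ^ 3 := by ring
    have : 0 < q ^ 3 := by positivity
    omega
  -- ===================== lower bound construction =====================
  refine ⟨?_, upper⟩
  set S : Finset F := Finset.univ.filter (fun x : F => x ^ q = x) with hSdef
  have hScard : S.card = q := aux_card_S q p k hk hqpk hF
  have hSmem : ∀ x : F, x ∈ S ↔ x ^ q = x := by intro x; simp [hSdef]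
  obtain ⟨g, hg⟩ := IsCyclic.exists_generator (α := Fˣ)
  set l : F := (g : F) with hl
  have hl0 : l ≠ 0 := Units.ne_zero g
  have hlnot : ¬ ((l ^ (q - 1)) ^ q = l ^ (q - 1)) := by
    intro h
    have hord : orderOf g = q ^ 2 - 1 := by
      rw [orderOf_eq_card_of_forall_mem_zpowers hg, Nat.card_units,
        Nat.card_eq_fintype_card, hF]
    have hu : (g ^ ((q - 1) * q)) = g ^ (q - 1) := by
      apply Units.ext
      push_cast
      rw [pow_mul]
      exact h
    have hmod := (pow_eq_pow_iff_modEq (x := g)).mp hu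
    rw [hord] at hmod
    have hdvd : (q ^ 2 - 1) ∣ (q - 1) * q - (q - 1) :=
      (Nat.modEq_iff_dvd' (Nat.le_mul_of_pos_right _ (by omega))).mp hmod.symm
    have heq : (q - 1) * q - (q - 1) = (q - 1) * (q - 1) := by
      obtain ⟨a, rfl⟩ : ∃ a, q = a + 2 := ⟨q - 2, by omega⟩
      have e : a + 2 - 1 = a + 1 := by omega
      rw [e]
      have h' : (a + 1) * (a + 2) = (a + 1) * (a + 1) + (a + 1) := by ring
      omega
    rw [heq] at hdvd
    have hpos : 0 < (q - 1) * (q - 1) := by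
      have : 1 ≤ q - 1 := by omega
      exact Nat.mul_pos this this
    have hle := Nat.le_of_dvd hpos hdvd
    obtain ⟨a, rfl⟩ : ∃ a, q = a + 2 := ⟨q - 2, by omega⟩
    have e : a + 2 - 1 = a + 1 := by omega
    rw [e] at hle
    have h1 : (a + 2) ^ 2 = (a + 1) * (a + 1) + 2 * a + 3 := by ring
    omega
  have keyInj : ∀ u v : F, u ^ q = u → v ^ q = v → l * u = l ^ q * v →
      u = 0 ∧ v = 0 := by
    intro u v hu hv h
    by_cases hv0 : v = 0
    · subst hv0
      rw [mul_zero] at h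
      exact ⟨(mul_eq_zero.mp h).resolve_left hl0, rfl⟩
    · exfalso
      apply hlnot
      have hlq : l ^ q = l ^ (q - 1) * l := by
        rw [← pow_succ]; congr 1; omega
      have h2 : u = l ^ (q - 1) * v := by
        apply mul_left_cancel₀ hl0
        rw [h, hlq]; ring
      have h3 : l ^ (q - 1) = u * v⁻¹ := by
        rw [h2]
        field_simp
      rw [h3, mul_pow, inv_pow, hu, hv]
  -- injectivity of (s,t) ↦ s + t^q on K × K
  have phiInj : ∀ s t s' t' : F,
      (∃ w, w ^ q = w ∧ s = l * w) → (∃ w, w ^ q = w ∧ t = l * w) →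
      (∃ w, w ^ q = w ∧ s' = l * w) → (∃ w, w ^ q = w ∧ t' = l * w) →
      s + t ^ q = s' + t' ^ q → s = s' ∧ t = t' := by
    rintro s t s' t' ⟨u, hu, rfl⟩ ⟨v, hv, rfl⟩ ⟨u', hu', rfl⟩ ⟨v', hv', rfl⟩ h
    have e1 : (l * v) ^ q = l ^ q * v := by rw [mul_pow, hv]
    have e2 : (l * v') ^ q = l ^ q * v' := by rw [mul_pow, hv']
    rw [e1, e2] at h
    have h1 : l * (u - u') = l ^ q * (v' - v) := by ring_nf; linear_combination h
    have h2 := keyInj (u - u') (v' - v)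
      (by rw [frob_sub, hu, hu']) (by rw [frob_sub, hv', hv]) h1
    have hu2 : u = u' := sub_eq_zero.mp h2.1
    have hv2 : v = v' := (sub_eq_zero.mp h2.2).symm
    exact ⟨by rw [hu2], by rw [hv2]⟩
  -- K as a finset, surjectivity
  set K : Finset F := S.image (fun u => l * u) with hKdef
  have hKcard : K.card = q := by
    rw [hKdef, Finset.card_image_of_injective _ (mul_right_injective₀ hl0), hScard]
  have hKmem : ∀ s : F, s ∈ K ↔ ∃ w, w ^ q = w ∧ s = l * w := by
    intro s
    simp only [hKdef, Finset.mem_image, hSdef, Finset.mem_filter, Finset.mem_univ, true_and]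
    constructor
    · rintro ⟨w, hw, rfl⟩; exact ⟨w, hw, rfl⟩
    · rintro ⟨w, hw, rfl⟩; exact ⟨w, hw, rfl⟩
  have phiSurj : ∀ y : F, ∃ s t : F, (∃ w, w ^ q = w ∧ s = l * w) ∧
      (∃ w, w ^ q = w ∧ t = l * w) ∧ s + t ^ q = y := by
    intro y
    have himg : (K ×ˢ K).image (fun st : F × F => st.1 + st.2 ^ q) = Finset.univ := by
      apply Finset.eq_univ_of_card
      rw [Finset.card_image_of_injOn, Finset.card_product, hKcard, hF]
      · ring
      · rintro ⟨s, t⟩ hst ⟨s', t'⟩ hst' h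
        simp only [Finset.mem_coe, Finset.mem_product] at hst hst'
        have := phiInj s t s' t' ((hKmem s).1 hst.1) ((hKmem t).1 hst.2)
          ((hKmem s').1 hst'.1) ((hKmem t').1 hst'.2) h
        simp only [Prod.mk.injEq]
        exact this
    have hy : y ∈ (K ×ˢ K).image (fun st : F × F => st.1 + st.2 ^ q) := by
      rw [himg]; exact Finset.mem_univ y
    obtain ⟨⟨s, t⟩, hst, hsty⟩ := Finset.mem_image.mp hy
    simp only [Finset.mem_product] at hst
    exact ⟨s, t, (hKmem s).1 hst.1, (hKmem t).1 hst.2, hsty⟩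
  choose sf tf hsf htf hstf using phiSurj
  have uniq : ∀ y s t : F, (∃ w, w ^ q = w ∧ s = l * w) → (∃ w, w ^ q = w ∧ t = l * w) →
      s + t ^ q = y → s = sf y ∧ t = tf y := by
    intro y s t hs ht hy
    exact phiInj s t (sf y) (tf y) hs ht (hsf y) (htf y) (hy.trans (hstf y).symm)
  -- color classes
  have hq0 : q ≠ 0 := by omega
  set c₀ : F × F → F × F := fun v => (v.1, (tf v.2) ^ q) with hc₀
  set M : Finset F := K.image (fun t => t ^ q) with hMdef
  have hMcard : M.card = q := by
    rw [hMdef, Finset.card_image_of_injOn fun a _ b _ h => frob_inj a b h, hKcard]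
  have hdecomp : ∀ τ : F, (∃ w, w ^ q = w ∧ τ = l * w) → sf (τ ^ q) = 0 ∧ tf (τ ^ q) = τ := by
    intro τ hτ
    have h0 : (∃ w : F, w ^ q = w ∧ (0 : F) = l * w) := ⟨0, by rw [zero_pow hq0], by rw [mul_zero]⟩
    have := uniq (τ ^ q) 0 τ h0 hτ (by ring)
    exact ⟨this.1.symm, this.2.symm⟩
  set T : Finset (F × F) := Finset.univ ×ˢ M with hTdef
  have hc₀mem : ∀ v : F × F, c₀ v ∈ T := by
    intro v
    rw [hTdef, Finset.mem_product]
    refine ⟨Finset.mem_univ _, ?_⟩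
    rw [hMdef]
    exact Finset.mem_image_of_mem _ ((hKmem (tf v.2)).2 (htf v.2))
  have hTcard : T.card = q ^ 3 := by
    rw [hTdef, Finset.card_product, Finset.card_univ, hF, hMcard]; ring
  have e : {a : F × F // a ∈ T} ≃ Fin (q ^ 3) :=
    Fintype.equivFinOfCardEq (by rw [Fintype.card_coe, hTcard])
  set c : F × F → Fin (q ^ 3) := fun v => e ⟨c₀ v, hc₀mem v⟩ with hc
  have part_mem : ∀ x μ s : F, (∃ w, w ^ q = w ∧ s = l * w) →
      (∃ τ, (∃ w, w ^ q = w ∧ τ = l * w) ∧ μ = τ ^ q) → c₀ (x, μ + s) = (x, μ) := by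
    rintro x μ s hs ⟨τ, hτ, rfl⟩
    have h := uniq (τ ^ q + s) s τ hs hτ (by ring)
    rw [hc₀]
    simp only
    rw [← h.2]
  -- completeness
  have complete : IsCompletePartition (unitaryPolarityGraph q F) c := by
    intro i j hij
    rcases hi : e.symm i with ⟨⟨x, μ⟩, haT⟩
    rcases hj : e.symm j with ⟨⟨z, ν⟩, hbT⟩
    rw [hTdef, Finset.mem_product, hMdef] at haT hbT
    obtain ⟨τ, hτK, hτ⟩ := Finset.mem_image.mp haT.2
    obtain ⟨τ', hτ'K, hτ'⟩ := Finset.mem_image.mp hbT.2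
    have hτm := (hKmem τ).1 hτK
    have hτ'm := (hKmem τ').1 hτ'K
    set w : F := x * z ^ q - μ - ν ^ q with hw
    refine ⟨(x, μ + sf w), (z, ν + tf w), ?_, ?_, ?_⟩
    · have hmem := part_mem x μ (sf w) (hsf w) ⟨τ, hτm, hτ.symm⟩
      have : (⟨c₀ (x, μ + sf w), hc₀mem _⟩ : {a : F × F // a ∈ T}) = e.symm i := by
        rw [hi]; exact Subtype.ext hmem
      rw [hc]
      simp only
      rw [this, Equiv.apply_symm_apply]
    · have hmem := part_mem z ν (tf w) (htf w) ⟨τ', hτ'm, hτ'.symm⟩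
      have : (⟨c₀ (z, ν + tf w), hc₀mem _⟩ : {a : F × F // a ∈ T}) = e.symm j := by
        rw [hj]; exact Subtype.ext hmem
      rw [hc]
      simp only
      rw [this, Equiv.apply_symm_apply]
    · rw [adj_iff]
      constructor
      · intro heq
        rw [Prod.mk.injEq] at heq
        obtain ⟨hxz, hμν⟩ := heq
        have hτ2 : τ ^ q = μ := hτ
        have hτ'2 : τ' ^ q = ν := hτ'
        have hμν' : sf w + τ ^ q = tf w + τ' ^ q := by
          rw [hτ2, hτ'2]
          linear_combination hμν
        have := phiInj (sf w) τ (tf w) τ' (hsf w) hτm (htf w) hτ'm hμν'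
        apply hij
        have hab : e.symm i = e.symm j := by
          rw [hi, hj]
          apply Subtype.ext
          simp only [Prod.mk.injEq]
          exact ⟨hxz, by rw [← hτ2, ← hτ'2, this.2]⟩
        have := congrArg e hab
        rwa [Equiv.apply_symm_apply, Equiv.apply_symm_apply] at this
      · left
        simp only
        rw [frob_add]
        have := hstf w
        rw [hw] at this
        linear_combination -this
  -- independence
  have indep : ∀ u v : F × F, c u = c v → ¬ (unitaryPolarityGraph q F).Adj u v := by
    intro u v hcuv hadj
    have hc₀uv : c₀ u = c₀ v := congrArg Subtype.val (e.injective hcuv)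
    rw [hc₀] at hc₀uv
    simp only [Prod.mk.injEq] at hc₀uv
    obtain ⟨hx, hμ⟩ := hc₀uv
    rw [adj_iff] at hadj
    obtain ⟨hne, hrel⟩ := hadj
    have key : ∀ y y' : F, (tf y) ^ q = (tf y') ^ q →
        u.1 * u.1 ^ q = y + y' ^ q → y = y' := by
      intro y y' hμeq heq
      have hccq : (u.1 * u.1 ^ q - tf y ^ q - (tf y ^ q) ^ q) ^ q
          = u.1 * u.1 ^ q - tf y ^ q - (tf y ^ q) ^ q := by
        rw [frob_sub, frob_sub, mul_pow, frob_frob, frob_frob]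
        ring
      have ha1 : y = sf y + tf y ^ q := (hstf y).symm
      have ha2 : y' = sf y' + tf y ^ q := by
        rw [hμeq]; exact (hstf y').symm
      have ha3 : y' ^ q = (sf y') ^ q + (tf y ^ q) ^ q := by
        conv_lhs => rw [ha2]
        rw [frob_add]
      have h1 : sf y + (sf y') ^ q = u.1 * u.1 ^ q - tf y ^ q - (tf y ^ q) ^ q := by
        rw [ha1, ha3] at heq
        rw [heq]
        ring
      have h2 : sf y' + (sf y) ^ q = u.1 * u.1 ^ q - tf y ^ q - (tf y ^ q) ^ q := by
        have h2' := congrArg (· ^ q) h1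
        rw [frob_add, frob_frob, hccq] at h2'
        linear_combination h2'
      have := phiInj (sf y) (sf y') (sf y') (sf y) (hsf y) (hsf y') (hsf y') (hsf y)
        (h1.trans h2.symm)
      rw [ha1, ha2, this.1]
    rcases hrel with h | h
    · rw [← hx] at h
      exact hne (Prod.ext hx (key u.2 v.2 hμ h))
    · rw [← hx] at h
      exact hne (Prod.ext hx (key v.2 u.2 hμ.symm h).symm)
  exact ⟨c, complete, indep⟩

theorem achromatic_and_pseudoAchromatic_unitaryPolarityGraph
    (q : ℕ) (hq : IsPrimePow q) (F : Type*) [Field F] [Fintype F]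
    (hF : Fintype.card F = q ^ 2) :
    achromatic (unitaryPolarityGraph q F) = q ^ 3 ∧
    pseudoAchromatic (unitaryPolarityGraph q F) = q ^ 3 := by
  classical
  obtain ⟨p, k, hp, hk, hqpk⟩ := hq
  have hp' : p.Prime := Nat.prime_iff.mpr hp
  haveI := Fact.mk hp'
  have hchar : ringChar F = p := by
    have h1 : (ringChar F).Prime := CharP.char_is_prime F (ringChar F)
    obtain ⟨n, -, hn2⟩ := FiniteField.card F (ringChar F)
    have key : ringChar F ^ (n : ℕ) = p ^ (k * 2) := by
      rw [← hn2, hF, ← hqpk, ← pow_mul]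
    have hdvd : ringChar F ∣ p ^ (k * 2) := by
      rw [← key]
      exact dvd_pow_self _ n.pos.ne'
    exact (Nat.prime_dvd_prime_iff_eq h1 hp').mp (h1.dvd_of_dvd_pow hdvd)
  haveI : CharP F p := hchar ▸ ringChar.charP F
  obtain ⟨⟨c, hcomp, hindep⟩, hupper⟩ := aux_main q p k hk hqpk.symm hF
  have hbound1 : ∀ r ∈ {r : ℕ | ∃ c : F × F → Fin r,
      IsCompletePartition (unitaryPolarityGraph q F) c ∧
      ∀ u v : F × F, c u = c v → ¬ (unitaryPolarityGraph q F).Adj u v}, r ≤ q ^ 3 := by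
    rintro r ⟨c', hc', -⟩
    exact hupper r c' hc'
  have hbound2 : ∀ r ∈ {r : ℕ | ∃ c : F × F → Fin r,
      IsCompletePartition (unitaryPolarityGraph q F) c}, r ≤ q ^ 3 := by
    rintro r ⟨c', hc'⟩
    exact hupper r c' hc'
  have hmem1 : q ^ 3 ∈ {r : ℕ | ∃ c : F × F → Fin r,
      IsCompletePartition (unitaryPolarityGraph q F) c ∧
      ∀ u v : F × F, c u = c v → ¬ (unitaryPolarityGraph q F).Adj u v} := ⟨c, hcomp, hindep⟩
  have hmem2 : q ^ 3 ∈ {r : ℕ | ∃ c : F × F → Fin r,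
      IsCompletePartition (unitaryPolarityGraph q F) c} := ⟨c, hcomp⟩
  constructor
  · exact le_antisymm (csSup_le ⟨q ^ 3, hmem1⟩ hbound1) (le_csSup ⟨q ^ 3, hbound1⟩ hmem1)
  · exact le_antisymm (csSup_le ⟨q ^ 3, hmem2⟩ hbound2) (le_csSup ⟨q ^ 3, hbound2⟩ hmem2)
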